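/- Let p be a prime, q > 1 a power of p, k ≥ 2 and m ≥ 1 integers with k ≤ p^m. Then for every integer j with k−1 ≤ j ≤ p^m−1 and every integer i with 0 ≤ i ≤ k−2, the entry U^{(k+p^m)}_{i,j} is equal to 0. -/

import Mathlib

open Polynomial

noncomputable section DrinfeldGM

/-- Integer-argument binomial coefficient `C(c,d)`, equal to `0` whenever any of
`c`, `d`, `c - d` is negative. -/
def intChoose (c d : ℤ) : ℤ :=
  if 0 ≤ c ∧ 0 ≤ d ∧ d ≤ c then (Nat.choose c.toNat d.toNat : ℤ) else 0

/-- The `(i,j)` entry of the matrix of the `U`-operator on `S_k(Γ₁(t))` in the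
Bandini–Valentino basis (here `t` is the polynomial variable `X`).  For `i = j` it is
`(-t)^j C(k-2-j, j)`; for `i = j + h(q-1)` with `h ≠ 0` (equivalently `(q-1) ∣ i - j`,
`i ≠ j`, in which case `h(q-1) = i - j`) it is
`-t^j (C(k-2-i, j-i) + (-1)^{j+1} C(k-2-i, j))`; and it is `0` otherwise. -/
def Uent (F : Type*) [Field F] (q k : ℕ) (i j : ℕ) : Polynomial F :=
  if i = j then
    (-Polynomial.X : Polynomial F) ^ j * ((intChoose ((k : ℤ) - 2 - (j : ℤ)) (j : ℤ) : ℤ) : Polynomial F)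
  else if ((q : ℤ) - 1) ∣ ((i : ℤ) - (j : ℤ)) then
    -((Polynomial.X : Polynomial F) ^ j *
      ((intChoose ((k : ℤ) - 2 - (i : ℤ)) ((j : ℤ) - (i : ℤ)) +
        (-1) ^ (j + 1) * intChoose ((k : ℤ) - 2 - (i : ℤ)) (j : ℤ) : ℤ) : Polynomial F))
  else 0

/-- The representing matrix `U^{(k)} ∈ M_{k-1}(𝔽_q[t])` of the `U`-operator on
`S_k(Γ₁(t))`, rows and columns indexed by `0, …, k-2`. -/
def Umat (F : Type*) [Field F] (q k : ℕ) :
    Matrix (Fin (k - 1)) (Fin (k - 1)) (Polynomial F) :=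
  Matrix.of fun i j => Uent F q k (i : ℕ) (j : ℕ)

/-- A matrix over `𝔽_q[[t]]` is *glissando* if every entry of its `j`-th column is an
`𝔽_q`-multiple of `t^j`. -/
def Glissando {F : Type*} [Field F] {m n : ℕ}
    (B : Matrix (Fin m) (Fin n) (PowerSeries F)) : Prop :=
  ∀ i j, ∃ c : F, B i j = PowerSeries.C c * (PowerSeries.X : PowerSeries F) ^ (j : ℕ)

/-- The inclusion `𝔽_q[t] → 𝔽_q[[t]]`. -/
def polyToPS (F : Type*) [Field F] : Polynomial F →+* PowerSeries F :=
  Polynomial.coeToPowerSeries.ringHom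

/-- The inclusion of `𝔽_q[[t]]` into a fixed algebraic closure `K̄` of `K = 𝔽_q((t))`. -/
def psToKbar (F : Type*) [Field F] :
    PowerSeries F →+* AlgebraicClosure (LaurentSeries F) :=
  (algebraMap (LaurentSeries F) (AlgebraicClosure (LaurentSeries F))).comp
    (algebraMap (PowerSeries F) (LaurentSeries F))

/-- The inclusion `𝔽_q[t] → K̄`. -/
def polyToKbar (F : Type*) [Field F] :
    Polynomial F →+* AlgebraicClosure (LaurentSeries F) :=
  (psToKbar F).comp (polyToPS F)

/-- The element `t` of `K̄`. -/
def tbar (F : Type*) [Field F] : AlgebraicClosure (LaurentSeries F) :=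
  psToKbar F PowerSeries.X

/-- Integrality over `𝔽_q[[t]]` of an element of `K̄`. -/
def IntegralPS (F : Type*) [Field F] (x : AlgebraicClosure (LaurentSeries F)) : Prop :=
  letI : Algebra (PowerSeries F) (AlgebraicClosure (LaurentSeries F)) := (psToKbar F).toAlgebra
  IsIntegral (PowerSeries F) x

/-- `HasVal F λ α` says that `λ ∈ K̄` is nonzero and has valuation `α` for the unique
extension `v` to `K̄` of the `t`-adic valuation with `v(t) = 1`: writing `α = a/b` with
`b > 0`, this means that both `λ^b/t^a` and `t^a/λ^b` are integral over `𝔽_q[[t]]`. -/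
def HasVal (F : Type*) [Field F] (lam : AlgebraicClosure (LaurentSeries F)) (α : ℚ) : Prop :=
  lam ≠ 0 ∧ ∃ a b : ℤ, 0 < b ∧ α = (a : ℚ) / (b : ℚ) ∧
    IntegralPS F (lam ^ b / tbar F ^ a) ∧ IntegralPS F (tbar F ^ a / lam ^ b)

/-- `d(k, α)`: the number of roots `λ` of `det(X·I - U^{(k)})` in `K̄` with `v(λ) = α`,
counted with multiplicity.  This is the dimension of the slope-`α` generalized eigenspace
of the `U`-operator on `S_k(Γ₁(t))`. -/
def dDim (F : Type*) [Field F] (q k : ℕ) (α : ℚ) : ℕ :=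
  letI := Classical.decPred fun lam : AlgebraicClosure (LaurentSeries F) => HasVal F lam α
  Multiset.card <| Multiset.filter (fun lam => HasVal F lam α) <|
    (((Umat F q k).charpoly).map (polyToKbar F)).roots

/-- `det(I - t^l X B)` for a square matrix `B` over `𝔽_q[[t]]`, as a polynomial in `X`
over `𝔽_q[[t]]`. -/
def charSeriesTw (F : Type*) [Field F] {m : ℕ} (l : ℕ)
    (B : Matrix (Fin m) (Fin m) (PowerSeries F)) : Polynomial (PowerSeries F) :=
  Matrix.det (1 - (Polynomial.C ((PowerSeries.X : PowerSeries F) ^ l) * Polynomial.X) •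
    B.map Polynomial.C)

/-- `det(I - X B)` for a square matrix `B` over `𝔽_q[[t]]`. -/
def charSeriesPS (F : Type*) [Field F] {m : ℕ}
    (B : Matrix (Fin m) (Fin m) (PowerSeries F)) : Polynomial (PowerSeries F) :=
  Matrix.det (1 - (Polynomial.X : Polynomial (PowerSeries F)) • B.map Polynomial.C)

/-- `P^{(k)}(X) = det(I - X·U^{(k)}) ∈ 𝔽_q[t][X]`. -/
def Pser (F : Type*) [Field F] (q k : ℕ) : Polynomial (Polynomial F) :=
  Matrix.det (1 - (Polynomial.X : Polynomial (Polynomial F)) • (Umat F q k).map Polynomial.C)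



lemma choose_pow_add_modEq (p : ℕ) (hp : p.Prime) :
    ∀ m r s : ℕ, r < p ^ m → s < p ^ m →
      Nat.choose (p ^ m + r) s ≡ Nat.choose r s [MOD p] := by
  haveI : Fact p.Prime := ⟨hp⟩
  intro m
  induction m with
  | zero =>
    intro r s hr hs
    have hr0 : r = 0 := by simpa using Nat.lt_one_iff.mp (by simpa using hr)
    have hs0 : s = 0 := by simpa using Nat.lt_one_iff.mp (by simpa using hs)
    subst hr0; subst hs0; simp [Nat.ModEq]
  | succ m ih =>
    intro r s hr hs
    have hp0 : 0 < p := hp.pos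
    have h1 : (p ^ (m + 1) + r) % p = r % p := by
      rw [pow_succ']; exact Nat.mul_add_mod _ _ _
    have h2 : (p ^ (m + 1) + r) / p = p ^ m + r / p := by
      rw [pow_succ']; exact Nat.mul_add_div hp0 _ _
    have hr' : r / p < p ^ m := by
      rw [Nat.div_lt_iff_lt_mul hp0]; rw [pow_succ] at hr; exact hr
    have hs' : s / p < p ^ m := by
      rw [Nat.div_lt_iff_lt_mul hp0]; rw [pow_succ] at hs; exact hs
    calc Nat.choose (p ^ (m + 1) + r) s
        ≡ Nat.choose ((p ^ (m + 1) + r) % p) (s % p) *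
            Nat.choose ((p ^ (m + 1) + r) / p) (s / p) [MOD p] :=
          Choose.choose_modEq_choose_mod_mul_choose_div_nat
      _ = Nat.choose (r % p) (s % p) * Nat.choose (p ^ m + r / p) (s / p) := by
          rw [h1, h2]
      _ ≡ Nat.choose (r % p) (s % p) * Nat.choose (r / p) (s / p) [MOD p] :=
          Nat.ModEq.mul_left _ (ih _ _ hr' hs')
      _ ≡ Nat.choose r s [MOD p] :=
          Choose.choose_modEq_choose_mod_mul_choose_div_nat.symm

lemma intChoose_dvd_aux (p m r s : ℕ) (hp : p.Prime) (hr : r < p ^ m)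
    (hs : s < p ^ m) (hrs : r < s) :
    (p : ℤ) ∣ intChoose ((p ^ m + r : ℕ) : ℤ) ((s : ℕ) : ℤ) := by
  rw [intChoose, if_pos ⟨by positivity, by positivity,
    by exact_mod_cast (by omega : s ≤ p ^ m + r)⟩]
  have hmod : Nat.choose (p ^ m + r) s ≡ 0 [MOD p] := by
    have := choose_pow_add_modEq p hp m r s hr hs
    rwa [Nat.choose_eq_zero_of_lt hrs] at this
  have hdvd : p ∣ Nat.choose (p ^ m + r) s :=
    (Nat.modEq_zero_iff_dvd).mp hmod
  rw [Int.toNat_natCast, Int.toNat_natCast]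
  exact_mod_cast hdvd

/-- For `2 ≤ k ≤ p^m` (`m ≥ 1`), every entry of `U^{(k+p^m)}` in a row `i ≤ k-2` and a
column `j` with `k-1 ≤ j ≤ p^m-1` vanishes. -/
theorem Umat_entry_eq_zero_of_middle_col
    (p q : ℕ) (hp : p.Prime) (hq : ∃ e : ℕ, 1 ≤ e ∧ q = p ^ e)
    (F : Type) [Field F] [Fintype F] (hF : Fintype.card F = q)
    (k m : ℕ) (hk : 2 ≤ k) (hm : 1 ≤ m) (hkpm : k ≤ p ^ m)
    (i j : Fin (k + p ^ m - 1))
    (hi : (i : ℕ) ≤ k - 2) (hj1 : k - 1 ≤ (j : ℕ)) (hj2 : (j : ℕ) ≤ p ^ m - 1) :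
    Umat F q (k + p ^ m) i j = 0 := by
  have hp2 : 2 ≤ p := hp.two_le
  have hpm2 : p ≤ p ^ m := Nat.le_self_pow (by omega) p
  have hij : (i : ℕ) < (j : ℕ) := by omega
  show Uent F q (k + p ^ m) (i : ℕ) (j : ℕ) = 0
  rw [Uent, if_neg (by omega : ¬ (i : ℕ) = (j : ℕ))]
  split_ifs with h
  · set r : ℕ := k - 2 - (i : ℕ) with hr
    have hrlt : r < p ^ m := by omega
    have e1 : ((k + p ^ m : ℕ) : ℤ) - 2 - ((i : ℕ) : ℤ) = ((p ^ m + r : ℕ) : ℤ) := by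
      push_cast; omega
    have e2 : ((j : ℕ) : ℤ) - ((i : ℕ) : ℤ) = ((((j : ℕ) - (i : ℕ)) : ℕ) : ℤ) := by
      omega
    have d1 : (p : ℤ) ∣ intChoose (((k + p ^ m : ℕ) : ℤ) - 2 - ((i : ℕ) : ℤ))
        (((j : ℕ) : ℤ) - ((i : ℕ) : ℤ)) := by
      rw [e1, e2]
      exact intChoose_dvd_aux p m r ((j : ℕ) - (i : ℕ)) hp hrlt (by omega) (by omega)
    have d2 : (p : ℤ) ∣ intChoose (((k + p ^ m : ℕ) : ℤ) - 2 - ((i : ℕ) : ℤ))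
        (((j : ℕ) : ℤ)) := by
      rw [e1]
      exact intChoose_dvd_aux p m r (j : ℕ) hp hrlt (by omega) (by omega)
    obtain ⟨c, hc⟩ := dvd_add d1 (Dvd.dvd.mul_left d2 _)
    rw [hc]
    have hpF : ((p : ℕ) : F) = 0 := by
      obtain ⟨e, he1, he2⟩ := hq
      have hcard : ((Fintype.card F : ℕ) : F) = 0 := FiniteField.cast_card_eq_zero F
      rw [hF, he2] at hcard
      push_cast at hcard
      exact pow_eq_zero_iff (by omega) |>.mp hcard
    have hpP : ((p : ℕ) : Polynomial F) = 0 := by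
      rw [← map_natCast (Polynomial.C : F →+* Polynomial F) p, hpF, map_zero]
    push_cast
    rw [hpP]
    ring
  · rfl

end DrinfeldGM
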